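/- Δ-system lemma: every uncountable family of finite sets contains an uncountable subfamily forming a Δ-system, i.e., there is a finite set R (the root) such that any two distinct members of the subfamily intersect exactly in R. -/
import Mathlib

open Set

private lemma delta_aux {α : Type*} [DecidableEq α] :
    ∀ n : ℕ, ∀ 𝒜 : Set (Finset α), (∀ A ∈ 𝒜, A.card = n) → ¬𝒜.Countable →
    ∃ R : Finset α, ∃ ℬ ⊆ 𝒜, ¬ℬ.Countable ∧
      ∀ A ∈ ℬ, ∀ B ∈ ℬ, A ≠ B → A ∩ B = R := by
  intro n
  induction n with
  | zero =>
    intro 𝒜 hcard hunc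
    exact absurd (Countable.mono (fun A hA => by
      simpa [Finset.card_eq_zero] using hcard A hA) (countable_singleton (∅ : Finset α))) hunc
  | succ n ih =>
    intro 𝒜 hcard hunc
    by_cases hx : ∃ x : α, ¬{A ∈ 𝒜 | x ∈ A}.Countable
    · -- common element case
      obtain ⟨x, hxunc⟩ := hx
      set 𝒜x : Set (Finset α) := {A ∈ 𝒜 | x ∈ A} with h𝒜x
      set 𝒞 : Set (Finset α) := (fun A => A.erase x) '' 𝒜x with h𝒞
      have hinj : InjOn (fun A => A.erase x) 𝒜x := by
        intro A hA B hB hAB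
        have h2 : insert x (A.erase x) = insert x (B.erase x) := congrArg (insert x) hAB
        rwa [Finset.insert_erase hA.2, Finset.insert_erase hB.2] at h2
      have h𝒞unc : ¬𝒞.Countable := by
        intro hc
        exact hxunc ((mapsTo_image _ _).countable_of_injOn hinj hc)
      have h𝒞card : ∀ C ∈ 𝒞, C.card = n := by
        rintro C ⟨A, hA, rfl⟩
        rw [Finset.card_erase_of_mem hA.2, hcard A hA.1]; omega
      obtain ⟨R, ℬ', hℬ'sub, hℬ'unc, hℬ'delta⟩ := ih 𝒞 h𝒞card h𝒞unc
      refine ⟨insert x R, (insert x) '' ℬ', ?_, ?_, ?_⟩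
      · rintro _ ⟨B, hB, rfl⟩
        obtain ⟨A, hA, rfl⟩ := hℬ'sub hB
        rw [Finset.insert_erase hA.2]
        exact hA.1
      · intro hc
        refine hℬ'unc ((mapsTo_image _ _).countable_of_injOn ?_ hc)
        intro B hB B' hB' hBB'
        have hxB : x ∉ B := by
          obtain ⟨A, hA, rfl⟩ := hℬ'sub hB; exact Finset.notMem_erase x A
        have hxB' : x ∉ B' := by
          obtain ⟨A, hA, rfl⟩ := hℬ'sub hB'; exact Finset.notMem_erase x A
        have : (insert x B).erase x = (insert x B').erase x := by rw [hBB']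
        rwa [Finset.erase_insert hxB, Finset.erase_insert hxB'] at this
      · rintro _ ⟨B, hB, rfl⟩ _ ⟨B', hB', rfl⟩ hne
        have hBB' : B ≠ B' := by rintro rfl; exact hne rfl
        rw [show insert x B ∩ insert x B' = insert x (B ∩ B') by ext y; simp; tauto,
          hℬ'delta B hB B' hB' hBB']
    · -- disjoint case via Zorn
      push_neg at hx
      set S : Set (Set (Finset α)) :=
        {ℬ | ℬ ⊆ 𝒜 ∧ ∀ A ∈ ℬ, ∀ B ∈ ℬ, A ≠ B → A ∩ B = ∅} with hS
      obtain ⟨m, hm⟩ := zorn_subset S (by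
        intro c hcS hchain
        refine ⟨⋃₀ c, ⟨?_, ?_⟩, fun s hs => subset_sUnion_of_mem hs⟩
        · exact sUnion_subset fun b hb => (hcS hb).1
        · rintro A ⟨b, hb, hA⟩ B ⟨b', hb', hB⟩ hne
          rcases hchain.total hb hb' with hsub | hsub
          · exact (hcS hb').2 A (hsub hA) B hB hne
          · exact (hcS hb).2 A hA B (hsub hB) hne)
      refine ⟨∅, m, hm.prop.1, ?_, hm.prop.2⟩
      intro hmc
      set T : Set α := ⋃ B ∈ m, (↑B : Set α) with hT
      have hTcount : T.Countable := hmc.biUnion fun B _ => B.countable_toSet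
      have hmeet : ∀ A ∈ 𝒜, ∃ x ∈ T, x ∈ A := by
        intro A hA
        have hAne : A.Nonempty := by
          rw [← Finset.card_pos, hcard A hA]; omega
        by_cases hAm : A ∈ m
        · obtain ⟨y, hy⟩ := hAne
          exact ⟨y, mem_biUnion hAm hy, hy⟩
        · by_contra hno
          push_neg at hno
          have hdisj : ∀ B ∈ m, A ∩ B = ∅ := by
            intro B hB
            rw [Finset.eq_empty_iff_forall_notMem]
            intro y hy
            exact hno y (mem_biUnion hB (Finset.mem_of_mem_inter_right hy))
              (Finset.mem_of_mem_inter_left hy)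
          have hins : insert A m ∈ S := by
            refine ⟨insert_subset hA hm.prop.1, ?_⟩
            rintro B (rfl | hB) C (rfl | hC) hne
            · exact absurd rfl hne
            · exact hdisj C hC
            · rw [Finset.inter_comm]; exact hdisj B hB
            · exact hm.prop.2 B hB C hC hne
          exact hAm (hm.2 hins (subset_insert A m) (mem_insert A m))
      have hcover : 𝒜 ⊆ ⋃ x ∈ T, {A ∈ 𝒜 | x ∈ A} := by
        intro A hA
        obtain ⟨x, hxT, hxA⟩ := hmeet A hA
        exact mem_biUnion hxT ⟨hA, hxA⟩
      have : 𝒜.Countable :=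
        Countable.mono hcover (hTcount.biUnion fun x _ => not_not.1 (not_not.2 (hx x)))
      exact hunc this

/-- Δ-system lemma: every uncountable family of finite sets contains an uncountable
subfamily forming a Δ-system, i.e. there is a finite root `R` such that any two
distinct members of the subfamily intersect exactly in `R`. -/
theorem stmt_16 {α : Type*} [DecidableEq α] (𝒜 : Set (Finset α)) (h : ¬𝒜.Countable) :
    ∃ R : Finset α, ∃ ℬ ⊆ 𝒜, ¬ℬ.Countable ∧
      ∀ A ∈ ℬ, ∀ B ∈ ℬ, A ≠ B → A ∩ B = R := by
  have hdecomp : 𝒜 = ⋃ n : ℕ, {A ∈ 𝒜 | A.card = n} := by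
    ext A; simp
  have : ∃ n : ℕ, ¬{A ∈ 𝒜 | A.card = n}.Countable := by
    by_contra hall
    push_neg at hall
    exact h (hdecomp ▸ countable_iUnion hall)
  obtain ⟨n, hn⟩ := this
  obtain ⟨R, ℬ, hsub, hunc, hdelta⟩ :=
    delta_aux n {A ∈ 𝒜 | A.card = n} (fun A hA => hA.2) hn
  exact ⟨R, ℬ, fun A hA => (hsub hA).1, hunc, hdelta⟩
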